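/- If an absolutely monotonic power series I(x) = Σ a_n x^n (not identically zero) has summands that concentrate superpolynomially near n ≈ f(x) with window term C x^{-ν}, where f is a polynomial with positive leading coefficient, then ν ≤ deg f. -/

import Mathlib

open Filter Asymptotics Polynomial

noncomputable def Iser (a : ℕ → ℝ) (x : ℝ) : ℝ := ∑' n : ℕ, a n * x ^ n

noncomputable def sumLE (a : ℕ → ℝ) (x y : ℝ) : ℝ :=
  ∑' n : ℕ, if (n : ℤ) ≤ ⌊y⌋ then a n * x ^ n else 0

noncomputable def sumGE (a : ℕ → ℝ) (x y : ℝ) : ℝ :=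
  ∑' n : ℕ, if ⌊y⌋ ≤ (n : ℤ) then a n * x ^ n else 0

/-- `I(x) = Σ aₙ xⁿ` is absolutely monotonic: all coefficients are nonnegative and
the series converges for every `x > 0`. -/
def AbsMono (a : ℕ → ℝ) : Prop :=
  (∀ n, 0 ≤ a n) ∧ ∀ x : ℝ, 0 < x → Summable fun n : ℕ => a n * x ^ n

/-- The summands of `Σ aₙ xⁿ` concentrate superpolynomially near `n ≈ f(x)` with
window term `C x^{-ν}`. -/
def SuperConc (a : ℕ → ℝ) (f : ℝ → ℝ) (C ν : ℝ) : Prop :=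
  ∀ p : ℝ, 0 < p →
    ((fun x : ℝ => sumLE a x (f x * (1 - C * x ^ (-ν))) / Iser a x)
        =o[atTop] fun x : ℝ => x ^ (-p)) ∧
    ((fun x : ℝ => sumGE a x (f x * (1 + C * x ^ (-ν))) / Iser a x)
        =o[atTop] fun x : ℝ => x ^ (-p))

/-- The summands of `Σ aₙ xⁿ` concentrate exponentially near `n ≈ f(x)` with
window term `C x^{-ν}` and parameters `(α, β)`. -/
def ExpConc (a : ℕ → ℝ) (f : ℝ → ℝ) (C ν α β : ℝ) : Prop :=
  ((fun x : ℝ => sumLE a x (f x * (1 - C * x ^ (-ν))) / Iser a x)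
      =O[atTop] fun x : ℝ => Real.exp (-α * x ^ β)) ∧
  ((fun x : ℝ => sumGE a x (f x * (1 + C * x ^ (-ν))) / Iser a x)
      =O[atTop] fun x : ℝ => Real.exp (-α * x ^ β))

/-- A real sequence is subpolynomial if `bₙ / n^p → 0` for every `p > 0`. -/
def Subpoly (b : ℕ → ℝ) : Prop :=
  ∀ p : ℝ, 0 < p → Tendsto (fun n : ℕ => b n / (n : ℝ) ^ p) atTop (nhds 0)

theorem stmt1 (a : ℕ → ℝ) (f : Polynomial ℝ) (C ν : ℝ) (hC : 0 < C) (hν : 0 < ν)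
    (ha : AbsMono a) (hne : ∃ n, a n ≠ 0) (hlead : 0 < f.leadingCoeff)
    (hconc : SuperConc a (fun x => f.eval x) C ν) :
    ν ≤ (f.natDegree : ℝ) := by
  by_contra hlt
  push_neg at hlt
  obtain ⟨n0, hn0⟩ := hne
  -- the window width tends to 0
  have hO : (fun x : ℝ => f.eval x * (2 * C * x ^ (-ν))) =O[atTop]
      fun x : ℝ => x ^ ((f.natDegree : ℝ) - ν) := by
    have h1 : (fun x : ℝ => f.eval x) =O[atTop]
        fun x : ℝ => x ^ (f.natDegree : ℕ) :=
      f.isEquivalent_atTop_lead.isBigO.trans (isBigO_const_mul_self _ _ _)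
    have h2 : (fun x : ℝ => 2 * C * x ^ (-ν)) =O[atTop] fun x : ℝ => x ^ (-ν) :=
      isBigO_const_mul_self _ _ _
    refine (h1.mul h2).congr' (EventuallyEq.refl _ _) ?_
    filter_upwards [eventually_gt_atTop (0:ℝ)] with x hx
    rw [← Real.rpow_natCast x, ← Real.rpow_add hx, sub_eq_add_neg]
  have hten : Tendsto (fun x : ℝ => f.eval x * (2 * C * x ^ (-ν))) atTop (nhds 0) := by
    refine hO.trans_tendsto ?_
    have := tendsto_rpow_neg_atTop (y := ν - (f.natDegree : ℝ)) (by linarith)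
    simpa [neg_sub] using this
  have hev : ∀ᶠ x : ℝ in atTop, f.eval x * (2 * C * x ^ (-ν)) ≤ 1 := by
    filter_upwards [hten.eventually (eventually_le_nhds (by norm_num : (0:ℝ) < 1))] with x hx
    exact hx
  -- the ratios sum to something ≥ 1 eventually
  have hge : ∀ᶠ x : ℝ in atTop,
      1 ≤ sumLE a x (f.eval x * (1 - C * x ^ (-ν))) / Iser a x
        + sumGE a x (f.eval x * (1 + C * x ^ (-ν))) / Iser a x := by
    filter_upwards [hev, eventually_gt_atTop (0:ℝ)] with x hx1 hx
    set ym := f.eval x * (1 - C * x ^ (-ν)) with hym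
    set yp := f.eval x * (1 + C * x ^ (-ν)) with hyp
    have hSum : Summable fun n : ℕ => a n * x ^ n := ha.2 x hx
    have hterm : ∀ n : ℕ, 0 ≤ a n * x ^ n := fun n =>
      mul_nonneg (ha.1 n) (pow_nonneg hx.le n)
    have hI : 0 < Iser a x :=
      Summable.tsum_pos hSum hterm n0 (mul_pos ((ha.1 n0).lt_of_ne (Ne.symm hn0)) (pow_pos hx n0))
    have hfloor : ⌊yp⌋ ≤ ⌊ym⌋ + 1 := by
      have : yp ≤ ym + 1 := by
        have : yp - ym = f.eval x * (2 * C * x ^ (-ν)) := by ring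
        linarith
      calc ⌊yp⌋ ≤ ⌊ym + 1⌋ := Int.floor_le_floor this
        _ = ⌊ym⌋ + 1 := Int.floor_add_one ym
    have hs1 : Summable fun n : ℕ => if (n : ℤ) ≤ ⌊ym⌋ then a n * x ^ n else 0 := by
      refine Summable.of_nonneg_of_le (fun n => ?_) (fun n => ?_) hSum
      · split <;> simp [hterm _]
      · split <;> simp [hterm _]
    have hs2 : Summable fun n : ℕ => if ⌊yp⌋ ≤ (n : ℤ) then a n * x ^ n else 0 := by
      refine Summable.of_nonneg_of_le (fun n => ?_) (fun n => ?_) hSum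
      · split <;> simp [hterm _]
      · split <;> simp [hterm _]
    have hle : Iser a x ≤ sumLE a x ym + sumGE a x yp := by
      have hptw : ∀ n : ℕ, a n * x ^ n ≤
          (if (n : ℤ) ≤ ⌊ym⌋ then a n * x ^ n else 0)
            + (if ⌊yp⌋ ≤ (n : ℤ) then a n * x ^ n else 0) := by
        intro n
        rcases le_or_gt (n : ℤ) ⌊ym⌋ with h | h
        · rw [if_pos h]
          have : (0:ℝ) ≤ if ⌊yp⌋ ≤ (n : ℤ) then a n * x ^ n else 0 := by
            split <;> simp [hterm _]
          linarith
        · have h2 : ⌊yp⌋ ≤ (n : ℤ) := le_trans hfloor h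
          rw [if_pos h2, if_neg (not_le.mpr h)]
          linarith [hterm n]
      have := Summable.tsum_le_tsum hptw hSum (hs1.add hs2)
      rwa [Summable.tsum_add hs1 hs2] at this
    rw [← add_div, le_div_iff₀ hI, one_mul]
    exact hle
  -- but the ratios tend to 0
  obtain ⟨ho1, ho2⟩ := hconc 1 one_pos
  have hto : Tendsto (fun x : ℝ =>
      sumLE a x (f.eval x * (1 - C * x ^ (-ν))) / Iser a x
        + sumGE a x (f.eval x * (1 + C * x ^ (-ν))) / Iser a x) atTop (nhds 0) :=
    (ho1.add ho2).isBigO.trans_tendsto (tendsto_rpow_neg_atTop one_pos)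
  have hlt1 : ∀ᶠ x : ℝ in atTop,
      sumLE a x (f.eval x * (1 - C * x ^ (-ν))) / Iser a x
        + sumGE a x (f.eval x * (1 + C * x ^ (-ν))) / Iser a x < 1 := by
    exact hto.eventually (eventually_lt_nhds (by norm_num : (0:ℝ) < 1))
  obtain ⟨x, h1, h2⟩ := (hge.and hlt1).exists
  linarith
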